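/- For full-rank X in R^{k x d} (k > d) and y in R^k, the least squares solution satisfies w*(X,y) = sum_{i=1}^k [det(X_{-i}^T X_{-i}) / ((k-d) det(X^T X))] * w*(X_{-i}, y_{-i}), where X_{-i}, y_{-i} remove the i-th row/entry and w*(X,y) = X^+ y. -/

import Mathlib

open Matrix

/-- Least squares solution via the pseudoinverse of a full column rank matrix. -/
noncomputable def lsq {k d : ℕ} (X : Matrix (Fin k) (Fin d) ℝ) (y : Fin k → ℝ) :
    Fin d → ℝ :=
  ((Xᵀ * X)⁻¹ * Xᵀ) *ᵥ y

/-- `XᵀX` is invertible when `X` has full column rank. -/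
lemma loo_isUnit_det {d k : ℕ} (X : Matrix (Fin k) (Fin d) ℝ) (hrank : X.rank = d) :
    IsUnit (Xᵀ * X).det := by
  have hker : LinearMap.ker (Xᵀ * X).mulVecLin = ⊥ := by
    rw [Matrix.ker_mulVecLin_transpose_mul_self]
    have h1 := LinearMap.finrank_range_add_finrank_ker X.mulVecLin
    rw [show Module.finrank ℝ (LinearMap.range X.mulVecLin) = d from hrank,
      Module.finrank_pi] at h1
    rw [Fintype.card_fin] at h1
    exact Submodule.finrank_eq_zero.mp (by omega)
  have hinj : Function.Injective (Xᵀ * X).mulVec := by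
    have := LinearMap.ker_eq_bot.mp hker
    exact this
  exact (Matrix.isUnit_iff_isUnit_det _).mp (Matrix.mulVec_injective_iff_isUnit.mp hinj)

/-- Rank-one update multiplication fact. -/
lemma loo_vecMulVec_mulVec {d : ℕ} (x v : Fin d → ℝ) :
    vecMulVec x x *ᵥ v = (x ⬝ᵥ v) • x := by
  ext a
  simp [Matrix.mulVec, vecMulVec_apply, dotProduct, Finset.mul_sum, Finset.sum_mul, mul_assoc,
    mul_comm, mul_left_comm]

/-- Matrix determinant lemma for a rank-one downdate. -/
lemma loo_det_sub {d : ℕ} (A : Matrix (Fin d) (Fin d) ℝ) (hdet : IsUnit A.det)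
    (x : Fin d → ℝ) :
    (A - vecMulVec x x).det = A.det * (1 - x ⬝ᵥ (A⁻¹ *ᵥ x)) := by
  have h1 : A - vecMulVec x x = A * (1 - vecMulVec (A⁻¹ *ᵥ x) x) := by
    rw [Matrix.mul_sub, Matrix.mul_one]
    congr 1
    have : A * vecMulVec (A⁻¹ *ᵥ x) x = vecMulVec (A *ᵥ (A⁻¹ *ᵥ x)) x := by
      ext a b
      simp only [Matrix.mul_apply, vecMulVec_apply, Matrix.mulVec, dotProduct,
        Finset.sum_mul, Finset.mul_sum, mul_assoc]
    rw [this, Matrix.mulVec_mulVec, Matrix.mul_nonsing_inv _ hdet, Matrix.one_mulVec]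
  rw [h1, Matrix.det_mul]
  congr 1
  have h2 : (1 : Matrix (Fin d) (Fin d) ℝ) - vecMulVec (A⁻¹ *ᵥ x) x
      = 1 + Matrix.replicateCol Unit (-(A⁻¹ *ᵥ x)) * Matrix.replicateRow Unit x := by
    rw [← vecMulVec_eq, sub_eq_add_neg]
    congr 1
    ext a b
    simp [vecMulVec_apply]
  rw [h2, Matrix.det_one_add_replicateCol_mul_replicateRow]
  rw [dotProduct_neg]
  ring

/-- If the leverage of row `i` equals `1`, then the fitted value at `i` equals `y i`. -/
lemma loo_leverage_one {d k : ℕ} (X : Matrix (Fin k) (Fin d) ℝ)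
    (hdet : IsUnit (Xᵀ * X).det) (y : Fin k → ℝ) (i : Fin k)
    (hlev : X i ⬝ᵥ ((Xᵀ * X)⁻¹ *ᵥ X i) = 1) :
    X i ⬝ᵥ (((Xᵀ * X)⁻¹ * Xᵀ) *ᵥ y) = y i := by
  set A := Xᵀ * X with hA_def
  set H := X * (A⁻¹ * Xᵀ) with hH_def
  have hAsym : Aᵀ = A := by rw [hA_def, Matrix.transpose_mul, Matrix.transpose_transpose]
  have hHsym : ∀ a b, H b a = H a b := by
    intro a b
    have : Hᵀ = H := by
      rw [hH_def, Matrix.transpose_mul, Matrix.transpose_mul, Matrix.transpose_transpose,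
        Matrix.transpose_nonsing_inv, hAsym, Matrix.mul_assoc]
    conv_lhs => rw [← this]
    rfl
  have hHidem : H * H = H := by
    rw [hH_def]
    rw [Matrix.mul_assoc, ← Matrix.mul_assoc (A⁻¹ * Xᵀ) X (A⁻¹ * Xᵀ),
      Matrix.mul_assoc A⁻¹ Xᵀ X, ← hA_def, Matrix.nonsing_inv_mul _ hdet, Matrix.one_mul]
  have hHii : H i i = 1 := by
    rw [hH_def]
    simp only [Matrix.mul_apply]
    rw [← hlev]
    simp [dotProduct, Matrix.mulVec, Matrix.mul_apply]
  have hsq : ∑ j, (H i j)^2 = 1 := by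
    have := congrArg (fun M => M i i) hHidem
    simp only [Matrix.mul_apply] at this
    rw [hHii] at this
    rw [← this]
    exact Finset.sum_congr rfl fun j _ => by rw [sq, hHsym j i]
  have hoff : ∀ j, j ≠ i → H i j = 0 := by
    intro j hj
    have h0 : ∑ j ∈ Finset.univ.erase i, (H i j)^2 = 0 := by
      have h1 : (H i i)^2 + ∑ j ∈ Finset.univ.erase i, (H i j)^2 = 1 := by
        rw [Finset.add_sum_erase Finset.univ (fun j => (H i j)^2) (Finset.mem_univ i)]
        exact hsq
      rw [hHii] at h1
      nlinarith [h1]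
    have := (Finset.sum_eq_zero_iff_of_nonneg (fun j _ => sq_nonneg (H i j))).mp h0 j
      (Finset.mem_erase.mpr ⟨hj, Finset.mem_univ j⟩)
    exact pow_eq_zero_iff (two_ne_zero) |>.mp this
  have hHy : (H *ᵥ y) i = y i := by
    rw [Matrix.mulVec, dotProduct]
    rw [Finset.sum_eq_single i (fun j _ hj => by rw [hoff j hj, zero_mul]) (by simp)]
    rw [hHii, one_mul]
  have hstep : ((X * (A⁻¹ * Xᵀ)) *ᵥ y) i = X i ⬝ᵥ ((A⁻¹ * Xᵀ) *ᵥ y) := by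
    rw [← Matrix.mulVec_mulVec]
    rfl
  rw [hH_def, hstep] at hHy
  exact hHy

/-- Leave-one-out decomposition of the least squares solution. -/
theorem stmt4 (d n : ℕ) (hd : 0 < d) (hdn : d < n + 1)
    (X : Matrix (Fin (n + 1)) (Fin d) ℝ) (hrank : X.rank = d)
    (y : Fin (n + 1) → ℝ) :
    lsq X y =
      ∑ i : Fin (n + 1),
        (((X.submatrix i.succAbove id)ᵀ * X.submatrix i.succAbove id).det /
            (((n + 1 : ℝ) - d) * (Xᵀ * X).det)) •
          lsq (X.submatrix i.succAbove id) (y ∘ i.succAbove) := by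
  classical
  have hdet : IsUnit (Xᵀ * X).det := loo_isUnit_det X hrank
  set A := Xᵀ * X with hA_def
  set w := lsq X y with hw_def
  set N : ℝ := (n + 1 : ℝ) - d with hN_def
  have hN : N ≠ 0 := by
    have : (d : ℝ) < (n : ℝ) + 1 := by exact_mod_cast hdn
    rw [hN_def]; intro h; linarith [sub_eq_zero.mp h]
  -- normal equations
  have normal : A *ᵥ w = Xᵀ *ᵥ y := by
    rw [hw_def, lsq, ← hA_def, Matrix.mulVec_mulVec, ← Matrix.mul_assoc,
      Matrix.mul_nonsing_inv _ hdet, Matrix.one_mul]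
  have hAu : ∀ x : Fin d → ℝ, A *ᵥ (A⁻¹ *ᵥ x) = x := by
    intro x
    rw [Matrix.mulVec_mulVec, Matrix.mul_nonsing_inv _ hdet, Matrix.one_mulVec]
  -- Gram matrix of the leave-one-out design
  have hAi : ∀ i : Fin (n + 1),
      (X.submatrix i.succAbove id)ᵀ * X.submatrix i.succAbove id
        = A - vecMulVec (X i) (X i) := by
    intro i
    ext a b
    simp only [hA_def, Matrix.sub_apply, Matrix.mul_apply, Matrix.transpose_apply,
      Matrix.submatrix_apply, id, vecMulVec_apply]
    rw [Fin.sum_univ_succAbove (fun j => X j a * X j b) i]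
    ring
  have hbi : ∀ i : Fin (n + 1),
      (X.submatrix i.succAbove id)ᵀ *ᵥ (y ∘ i.succAbove)
        = Xᵀ *ᵥ y - y i • X i := by
    intro i
    ext a
    simp only [Matrix.mulVec, dotProduct, Matrix.transpose_apply, Matrix.submatrix_apply, id,
      Function.comp_apply, Pi.sub_apply, Pi.smul_apply, smul_eq_mul]
    rw [Fin.sum_univ_succAbove (fun j => X j a * y j) i]
    ring
  -- key per-index identity
  have key : ∀ i : Fin (n + 1),
      (1 - X i ⬝ᵥ (A⁻¹ *ᵥ X i)) • lsq (X.submatrix i.succAbove id) (y ∘ i.succAbove)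
        = (1 - X i ⬝ᵥ (A⁻¹ *ᵥ X i)) • w - (y i - X i ⬝ᵥ w) • (A⁻¹ *ᵥ X i) := by
    intro i
    set x := X i with hx_def
    set h : ℝ := x ⬝ᵥ (A⁻¹ *ᵥ x) with hh_def
    by_cases hne : (1 : ℝ) - h = 0
    · -- degenerate case : leverage 1, residual is 0
      have hres : x ⬝ᵥ w = y i := by
        have := loo_leverage_one X hdet y i (by rw [← hh_def]; linarith [hne])
        exact this
      rw [show (1 : ℝ) - h = 0 from hne, hres]
      simp
    · -- nondegenerate case
      set c : ℝ := (y i - x ⬝ᵥ w) / (1 - h) with hc_def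
      have hc : c * (1 - h) = y i - x ⬝ᵥ w := by
        rw [hc_def]; field_simp
      set v : Fin d → ℝ := w - c • (A⁻¹ *ᵥ x) with hv_def
      have hxv : x ⬝ᵥ v = x ⬝ᵥ w - c * h := by
        rw [hv_def, dotProduct_sub, dotProduct_smul, smul_eq_mul, hh_def]
      have hAv : (A - vecMulVec x x) *ᵥ v = Xᵀ *ᵥ y - y i • x := by
        rw [Matrix.sub_mulVec, hv_def, Matrix.mulVec_sub, Matrix.mulVec_smul, hAu, normal,
          loo_vecMulVec_mulVec, ← hv_def, hxv]
        ext a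
        simp only [Pi.sub_apply, Pi.smul_apply, smul_eq_mul]
        rw [hc_def]
        field_simp
        ring
      have hdet_i : IsUnit ((X.submatrix i.succAbove id)ᵀ * X.submatrix i.succAbove id).det := by
        rw [hAi i, loo_det_sub A hdet x, ← hh_def]
        exact hdet.mul (Ne.isUnit hne)
      have hlsq : lsq (X.submatrix i.succAbove id) (y ∘ i.succAbove) = v := by
        rw [hAi i] at hdet_i
        rw [lsq, ← Matrix.mulVec_mulVec, hbi i, ← hAv, Matrix.mulVec_mulVec, hAi i,
          Matrix.nonsing_inv_mul _ hdet_i, Matrix.one_mulVec]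
      rw [hlsq, hv_def, smul_sub, smul_smul]
      congr 1
      rw [mul_comm (1 - h) c, hc]
  -- coefficient rewriting
  have hcoef : ∀ i : Fin (n + 1),
      (((X.submatrix i.succAbove id)ᵀ * X.submatrix i.succAbove id).det / (N * A.det))
        = N⁻¹ * (1 - X i ⬝ᵥ (A⁻¹ *ᵥ X i)) := by
    intro i
    rw [hAi i, loo_det_sub A hdet (X i)]
    rw [mul_comm N A.det, mul_div_mul_left _ _ (hdet.ne_zero), div_eq_inv_mul]
  -- sum of leverages is d
  have hlevsum : ∑ i : Fin (n + 1), X i ⬝ᵥ (A⁻¹ *ᵥ X i) = (d : ℝ) := by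
    have h1 : ∀ i : Fin (n + 1), X i ⬝ᵥ (A⁻¹ *ᵥ X i) = (X * (A⁻¹ * Xᵀ)) i i := by
      intro i
      simp [Matrix.mul_apply, dotProduct, Matrix.mulVec, Finset.mul_sum, mul_assoc]
    rw [Finset.sum_congr rfl (fun i _ => h1 i)]
    have h2 : ∑ i : Fin (n + 1), (X * (A⁻¹ * Xᵀ)) i i = Matrix.trace (X * (A⁻¹ * Xᵀ)) := rfl
    rw [h2, Matrix.trace_mul_comm, Matrix.mul_assoc, ← hA_def,
      Matrix.nonsing_inv_mul _ hdet, Matrix.trace_one]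
    simp
  -- sum of weighted residual directions is 0
  have hres0 : ∑ i : Fin (n + 1), (y i - X i ⬝ᵥ w) • (A⁻¹ *ᵥ X i) = 0 := by
    have h1 : ∑ i : Fin (n + 1), (y i - X i ⬝ᵥ w) • (A⁻¹ *ᵥ X i)
        = A⁻¹ *ᵥ (∑ i : Fin (n + 1), (y i - X i ⬝ᵥ w) • X i) := by
      symm
      rw [← Matrix.mulVecLin_apply, map_sum]
      simp [Matrix.mulVecLin_apply, Matrix.mulVec_smul]
    have h2 : ∑ i : Fin (n + 1), (y i - X i ⬝ᵥ w) • X i = 0 := by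
      funext a
      have h3 : ∑ i : Fin (n + 1), (y i - X i ⬝ᵥ w) * X i a
          = (Xᵀ *ᵥ y) a - (A *ᵥ w) a := by
        rw [hA_def, ← Matrix.mulVec_mulVec]
        simp [Matrix.mulVec, dotProduct, Finset.sum_sub_distrib, sub_mul, mul_sub, mul_comm]
      have h4 : (∑ i : Fin (n + 1), (y i - X i ⬝ᵥ w) • X i) a
          = ∑ i : Fin (n + 1), (y i - X i ⬝ᵥ w) * X i a := by
        simp [Finset.sum_apply]
      rw [h4, h3, normal, sub_self]
      rfl
    rw [h1, h2, Matrix.mulVec_zero]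
  -- assemble
  have hsum : ∑ i : Fin (n + 1), ((1 - X i ⬝ᵥ (A⁻¹ *ᵥ X i)) • w
      - (y i - X i ⬝ᵥ w) • (A⁻¹ *ᵥ X i)) = N • w := by
    rw [Finset.sum_sub_distrib, ← Finset.sum_smul, hres0, sub_zero]
    congr 1
    rw [Finset.sum_sub_distrib, hlevsum, Finset.sum_const, Finset.card_univ, Fintype.card_fin,
      nsmul_eq_mul, mul_one, hN_def]
    push_cast
    ring
  calc w = N⁻¹ • (N • w) := by rw [smul_smul, inv_mul_cancel₀ hN, one_smul]
    _ = N⁻¹ • ∑ i : Fin (n + 1), ((1 - X i ⬝ᵥ (A⁻¹ *ᵥ X i)) • w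
          - (y i - X i ⬝ᵥ w) • (A⁻¹ *ᵥ X i)) := by rw [hsum]
    _ = N⁻¹ • (∑ i : Fin (n + 1),
          (1 - X i ⬝ᵥ (A⁻¹ *ᵥ X i)) • lsq (X.submatrix i.succAbove id) (y ∘ i.succAbove)) := by
        rw [Finset.sum_congr rfl (fun i _ => (key i).symm)]
    _ = ∑ i : Fin (n + 1),
          (((X.submatrix i.succAbove id)ᵀ * X.submatrix i.succAbove id).det / (N * A.det)) •
            lsq (X.submatrix i.succAbove id) (y ∘ i.succAbove) := by
        rw [Finset.smul_sum]
        exact Finset.sum_congr rfl fun i _ => by rw [hcoef i, smul_smul]
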